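/- Single-atom completeness with respect to the inductive characterization of regular semantics: let (P,coP) be a logic program with coclauses, H a finite set of finite atoms, A a finite atom, E a finite set of equations, and σ ∈ sol(E) a ground substitution defined on all variables of H and A. If the judgment (Hσ ⊢ Aσ) belongs to the inductive interpretation of Loop(P,coP), then there exist a finite set of equations E' and θ ∈ sol(E') such that P;coP ⊢ H : ⟨A | E⟩ ⇒ E' is derivable and σ ⊑ θ. -/

import Mathlib

/- Framework: flexible coinductive logic programming (logic programs with coclauses).
   Terms are possibly infinite trees, modelled as M-types of a polynomial functor. -/

namespace FlexLP

/-- A first-order signature: function symbols and predicate symbols, each with an arity.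
Variables are represented by natural numbers (a countably infinite set). -/
structure Sig where
  Func : Type
  far : Func → ℕ
  Pred : Type
  par : Pred → ℕ

/-- Polynomial functor whose M-type is the type of possibly infinite terms:
nodes are labelled by function symbols (with `far` children) or variables (no children). -/
def TermP (S : Sig) : PFunctor :=
  ⟨S.Func ⊕ ℕ, fun l => Fin (match l with | Sum.inl f => S.far f | Sum.inr _ => 0)⟩

/-- Possibly infinite terms over the signature `S`. -/
def Term (S : Sig) : Type := (TermP S).M

/-- The term consisting of a single variable `x`. -/
def Term.var (S : Sig) (x : ℕ) : Term S :=
  PFunctor.M.mk ⟨Sum.inr x, fun i => i.elim0⟩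

/-- The variable `x` occurs in the term `t`. -/
inductive Term.Occurs (S : Sig) (x : ℕ) : Term S → Prop
  | root (t : Term S) (h : (PFunctor.M.dest t).1 = Sum.inr x) : Term.Occurs S x t
  | child (t : Term S) (i : (TermP S).B (PFunctor.M.dest t).1)
      (h : Term.Occurs S x ((PFunctor.M.dest t).2 i)) : Term.Occurs S x t

/-- The term `t` is finite (syntactic): all its branches are finite. -/
inductive Term.IsFinite (S : Sig) : Term S → Prop
  | mk (t : Term S) (h : ∀ i, Term.IsFinite S ((PFunctor.M.dest t).2 i)) : Term.IsFinite S t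

/-- The term `t` is ground: no variable occurs in it. -/
def Term.Ground (S : Sig) (t : Term S) : Prop := ∀ x, ¬ Term.Occurs S x t

/-- A substitution: a map from a finite set of variables to terms. -/
structure Subst (S : Sig) where
  toFun : ℕ → Option (Term S)
  finDom : {x | (toFun x).isSome}.Finite

/-- Domain of a substitution. -/
def Subst.dom {S : Sig} (σ : Subst S) : Set ℕ := {x | (σ.toFun x).isSome}

/-- A substitution is ground if all its values are ground terms. -/
def Subst.Ground {S : Sig} (σ : Subst S) : Prop :=
  ∀ x t, σ.toFun x = some t → Term.Ground S t

/-- `σ ⊑ θ` : `dom σ ⊆ dom θ` and the two substitutions agree on `dom σ`. -/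
def Subst.le {S : Sig} (σ θ : Subst S) : Prop :=
  ∀ x t, σ.toFun x = some t → θ.toFun x = some t

/-- One step of (simultaneous) substitution application, as a coalgebra.
The boolean flag records whether we are still in the original term (`true`)
or inside a substituted term (`false`). -/
def substStep (S : Sig) (σ : Subst S) : Term S × Bool → (TermP S).Obj (Term S × Bool) :=
  fun p =>
    match PFunctor.M.dest p.1, p.2 with
    | ⟨Sum.inl f, ch⟩, b => ⟨Sum.inl f, fun i => (ch i, b)⟩
    | ⟨Sum.inr x, ch⟩, true =>
        match σ.toFun x with
        | some s =>
            match PFunctor.M.dest s with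
            | ⟨l, ch'⟩ => ⟨l, fun i => (ch' i, false)⟩
        | none => ⟨Sum.inr x, fun i => (ch i, true)⟩
    | ⟨Sum.inr x, ch⟩, false => ⟨Sum.inr x, fun i => (ch i, false)⟩

/-- Application `tσ` of a substitution to a term. -/
def Term.subst {S : Sig} (t : Term S) (σ : Subst S) : Term S :=
  PFunctor.M.corec (substStep S σ) (t, true)

/-- Atoms: a predicate symbol applied to terms (a possibly infinite tree whose
root is labelled by a predicate symbol). -/
structure Atom (S : Sig) where
  pred : S.Pred
  args : Fin (S.par pred) → Term S

/-- The variable `x` occurs in the atom `A`. -/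
def Atom.Occurs {S : Sig} (x : ℕ) (A : Atom S) : Prop := ∃ i, Term.Occurs S x (A.args i)

/-- Ground atoms. The set of all ground atoms is the complete Herbrand base. -/
def Atom.Ground {S : Sig} (A : Atom S) : Prop := ∀ i, Term.Ground S (A.args i)

/-- Finite (syntactic) atoms. -/
def Atom.IsFinite {S : Sig} (A : Atom S) : Prop := ∀ i, Term.IsFinite S (A.args i)

/-- Application of a substitution to an atom. -/
def Atom.subst {S : Sig} (A : Atom S) (σ : Subst S) : Atom S :=
  ⟨A.pred, fun i => Term.subst (A.args i) σ⟩

/-- A (definite) clause `head :- body`, made of finite atoms. -/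
structure Clause (S : Sig) where
  head : Atom S
  body : List (Atom S)
  finHead : head.IsFinite
  finBody : ∀ B ∈ body, B.IsFinite

/-- Variables occurring in a clause. -/
def clauseVars {S : Sig} (C : Clause S) : Set ℕ :=
  {x | Atom.Occurs x C.head ∨ ∃ B ∈ C.body, Atom.Occurs x B}

/-- `Ground P` : the ground instances of clauses of `P`, viewed as inference rules
(pairs premises/conclusion) on the complete Herbrand base. -/
def GroundInst {S : Sig} (P : Set (Clause S)) : Set (Atom S × List (Atom S)) :=
  {r | ∃ C ∈ P, ∃ σ : Subst S, σ.Ground ∧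
        r.1 = C.head.subst σ ∧ r.2 = C.body.map (fun B => B.subst σ) ∧
        r.1.Ground ∧ ∀ B ∈ r.2, B.Ground}

/-- The (one step) inference operator `T_P` associated to a program. -/
def TP {S : Sig} (P : Set (Clause S)) (I : Set (Atom S)) : Set (Atom S) :=
  {A | ∃ r ∈ GroundInst P, r.1 = A ∧ ∀ B ∈ r.2, B ∈ I}

/-- `I` is a model of `P`. -/
def IsModel {S : Sig} (P : Set (Clause S)) (I : Set (Atom S)) : Prop := TP P I ⊆ I

/-- `I` is a comodel of `P`. -/
def IsComodel {S : Sig} (P : Set (Clause S)) (I : Set (Atom S)) : Prop := I ⊆ TP P I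

/-- `Ind P` : the inductive declarative semantics, i.e. the least model of `P`. -/
def Ind {S : Sig} (P : Set (Clause S)) : Set (Atom S) := ⋂₀ {I | IsModel P I}

/-- `FlexCo (P,coP)` : the declarative semantics of a logic program with coclauses,
i.e. the largest comodel of `P` included in `Ind (P ∪ coP)` (union of all such comodels). -/
def FlexCo {S : Sig} (P coP : Set (Clause S)) : Set (Atom S) :=
  ⋃₀ {I | IsComodel P I ∧ I ⊆ Ind (P ∪ coP)}

/-- `FlexReg (P,coP)` : the regular declarative semantics, i.e. the union of all
finite comodels of `P` included in `Ind (P ∪ coP)`. -/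
def FlexReg {S : Sig} (P coP : Set (Clause S)) : Set (Atom S) :=
  ⋃₀ {I | I.Finite ∧ IsComodel P I ∧ I ⊆ Ind (P ∪ coP)}

/-- An equation `s ≐ t` between terms. -/
abbrev Eqn (S : Sig) := Term S × Term S

/-- Variables occurring in a set of equations. -/
def eqnVars {S : Sig} (E : Set (Eqn S)) : Set ℕ :=
  {x | ∃ e ∈ E, Term.Occurs S x e.1 ∨ Term.Occurs S x e.2}

/-- `E` is a finite set of equations between finite (syntactic) terms. -/
def EqnSetFin {S : Sig} (E : Set (Eqn S)) : Prop :=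
  E.Finite ∧ ∀ e ∈ E, Term.IsFinite S e.1 ∧ Term.IsFinite S e.2

/-- `sol E` : the set of solutions of `E`, i.e. ground substitutions defined on all
variables of `E` that unify all the equations in `E`. -/
def sol {S : Sig} (E : Set (Eqn S)) : Set (Subst S) :=
  {σ | σ.Ground ∧ eqnVars E ⊆ σ.dom ∧ ∀ e ∈ E, e.1.subst σ = e.2.subst σ}

/-- `E` is solvable. -/
def Solvable {S : Sig} (E : Set (Eqn S)) : Prop := (sol E).Nonempty

/-- `eqs(A,B)` : the equations between the corresponding arguments of two atoms
with the same predicate symbol. -/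
def atomEqs {S : Sig} (A B : Atom S) : Set (Eqn S) :=
  {e | ∃ (h : A.pred = B.pred) (i : Fin (S.par A.pred)),
        e = (A.args i, B.args (Fin.cast (congrArg S.par h) i))}

/-- Variables occurring in a set of atoms. -/
def atomsVars {S : Sig} (H : Set (Atom S)) : Set ℕ := {x | ∃ A ∈ H, Atom.Occurs x A}

/-- Variables occurring in a sequence of atoms (a goal). -/
def goalVars {S : Sig} (G : List (Atom S)) : Set ℕ := {x | ∃ A ∈ G, Atom.Occurs x A}

/-- `ρ` is a renaming of the variables of clause `C` to fresh variables avoiding `avoid`: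
it maps (injectively) every variable of `C` to a variable not in `avoid`. -/
def FreshRenamingFor {S : Sig} (ρ : Subst S) (C : Clause S) (avoid : Set ℕ) : Prop :=
  (∀ x t, ρ.toFun x = some t → ∃ y, t = Term.var S y ∧ y ∉ avoid) ∧
  clauseVars C ⊆ ρ.dom ∧
  (∀ x y, ρ.toFun x = ρ.toFun y → (ρ.toFun x).isSome → x = y)

/-- The big-step operational semantics judgment `P;coP ⊢ H : ⟨G | E⟩ ⇒ E'` of
flexible coSLD resolution, inductively defined by the rules (empty), (co-hyp), (step). -/
inductive OpSem (S : Sig) :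
    Set (Clause S) → Set (Clause S) → Set (Atom S) → List (Atom S) →
      Set (Eqn S) → Set (Eqn S) → Prop
  | empty (P coP : Set (Clause S)) (H : Set (Atom S)) (E : Set (Eqn S)) :
      OpSem S P coP H [] E E
  | cohyp {P coP : Set (Clause S)} {H : Set (Atom S)} {G1 G2 : List (Atom S)}
      {A B : Atom S} {E1 E2 E3 : Set (Eqn S)} :
      coP ≠ ∅ → B ∈ H → A.pred = B.pred →
      Solvable (E1 ∪ atomEqs A B) →
      OpSem S (P ∪ coP) ∅ ∅ [A] (E1 ∪ atomEqs A B) E2 →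
      OpSem S P coP H (G1 ++ G2) E2 E3 →
      OpSem S P coP H (G1 ++ A :: G2) E1 E3
  | step {P coP : Set (Clause S)} {H : Set (Atom S)} {G1 G2 : List (Atom S)}
      {A : Atom S} {E1 E2 E3 : Set (Eqn S)} (C : Clause S) (ρ : Subst S) :
      C ∈ P →
      FreshRenamingFor ρ C (eqnVars E1 ∪ atomsVars H ∪ goalVars (G1 ++ A :: G2)) →
      A.pred = C.head.pred →
      Solvable (E1 ∪ atomEqs A (C.head.subst ρ)) →
      OpSem S P coP (H ∪ {A}) (C.body.map (fun B => B.subst ρ))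
        (E1 ∪ atomEqs A (C.head.subst ρ)) E2 →
      OpSem S P coP H (G1 ++ G2) E2 E3 →
      OpSem S P coP H (G1 ++ A :: G2) E1 E3

/-- `Ans(G,E,I)` : the set of answers to the goal `⟨G | E⟩` correct in the
interpretation `I`. -/
def Ans {S : Sig} (G : List (Atom S)) (E : Set (Eqn S)) (I : Set (Atom S)) :
    Set (Subst S) :=
  {σ | σ ∈ sol E ∧ goalVars G ⊆ σ.dom ∧ ∀ A ∈ G, A.subst σ ∈ I}

/-- The inductive interpretation of the inference system `Loop(P,coP)`, whose judgments
`H ⊢ A` pair a ground atom with a set of ground atoms (circular hypotheses);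
rules: (hp) `H ⊢ A` if `A ∈ H` and `A ∈ Ind (P ∪ coP)`;
(rule) from `H∪{A} ⊢ B` for every premise `B` of a ground instance of a clause of `P`
with conclusion `A`, infer `H ⊢ A`. -/
inductive LoopInd {S : Sig} (P coP : Set (Clause S)) : Set (Atom S) → Atom S → Prop
  | hp {H : Set (Atom S)} {A : Atom S} :
      A ∈ H → A ∈ Ind (P ∪ coP) → LoopInd P coP H A
  | rule {H : Set (Atom S)} {A : Atom S} (r : Atom S × List (Atom S)) :
      r ∈ GroundInst P → r.1 = A →
      (∀ B ∈ r.2, LoopInd P coP (H ∪ {A}) B) →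
      LoopInd P coP H A



/-! ### Infrastructure -/

section Infra
variable {S : Sig}

theorem dest_inj {a b : Term S} (h : PFunctor.M.dest a = PFunctor.M.dest b) : a = b := by
  have := congrArg PFunctor.M.mk h
  exact (PFunctor.M.mk_dest a).symm.trans (this.trans (PFunctor.M.mk_dest b))

theorem substStep_inl {σ : Subst S} {t : Term S} {f : S.Func} {ch} {b : Bool}
    (hd : PFunctor.M.dest t = ⟨Sum.inl f, ch⟩) :
    substStep S σ (t, b) = ⟨Sum.inl f, fun i => (ch i, b)⟩ := by
  simp [substStep, hd]; rfl

theorem substStep_inr_false {σ : Subst S} {t : Term S} {x : ℕ} {ch}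
    (hd : PFunctor.M.dest t = ⟨Sum.inr x, ch⟩) :
    substStep S σ (t, false) = ⟨Sum.inr x, fun i => (ch i, false)⟩ := by
  simp [substStep, hd]; rfl

theorem substStep_inr_some {σ : Subst S} {t s : Term S} {x : ℕ} {ch} {l} {ch'}
    (hd : PFunctor.M.dest t = ⟨Sum.inr x, ch⟩) (hs : σ.toFun x = some s)
    (hds : PFunctor.M.dest s = ⟨l, ch'⟩) :
    substStep S σ (t, true) = ⟨l, fun i => (ch' i, false)⟩ := by
  simp [substStep, hd, hs, hds]; rfl

theorem substStep_inr_none {σ : Subst S} {t : Term S} {x : ℕ} {ch}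
    (hd : PFunctor.M.dest t = ⟨Sum.inr x, ch⟩) (hs : σ.toFun x = none) :
    substStep S σ (t, true) = ⟨Sum.inr x, fun i => (ch i, true)⟩ := by
  simp [substStep, hd, hs]; rfl

/-- The corecursor at flag `false` is the identity. -/
theorem corec_false (σ : Subst S) (u : Term S) :
    PFunctor.M.corec (substStep S σ) (u, false) = u := by
  apply PFunctor.M.bisim (fun a b => a = PFunctor.M.corec (substStep S σ) (b, false))
  · intro x y hxy
    rcases hd : PFunctor.M.dest y with ⟨l, ch⟩
    have hstep : substStep S σ (y, false) = ⟨l, fun i => (ch i, false)⟩ := by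
      cases l with
      | inl f => exact substStep_inl hd
      | inr z => exact substStep_inr_false hd
    have hx : PFunctor.M.dest x
        = ⟨l, fun i => PFunctor.M.corec (substStep S σ) (ch i, false)⟩ := by
      rw [hxy, PFunctor.M.dest_corec, hstep]; rfl
    exact ⟨l, _, _, hx, rfl, fun i => rfl⟩
  · rfl

end Infra

section Infra2
variable {S : Sig}

theorem dest_subst_inl {σ : Subst S} {t : Term S} {f : S.Func} {ch}
    (hd : PFunctor.M.dest t = ⟨Sum.inl f, ch⟩) :
    PFunctor.M.dest (t.subst σ) = ⟨Sum.inl f, fun i => Term.subst (ch i) σ⟩ := by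
  rw [Term.subst, PFunctor.M.dest_corec, substStep_inl hd]; rfl

theorem subst_var_some {σ : Subst S} {t s : Term S} {x : ℕ} {ch}
    (hd : PFunctor.M.dest t = ⟨Sum.inr x, ch⟩) (hs : σ.toFun x = some s) :
    t.subst σ = s := by
  apply dest_inj
  rcases hds : PFunctor.M.dest s with ⟨l, ch'⟩
  rw [Term.subst, PFunctor.M.dest_corec, substStep_inr_some hd hs hds]
  show (⟨l, fun i => PFunctor.M.corec (substStep S σ) (ch' i, false)⟩ :
      (TermP S).Obj (Term S)) = ⟨l, ch'⟩
  exact congrArg (fun g => (⟨l, g⟩ : (TermP S).Obj (Term S)))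
    (funext fun i => corec_false σ (ch' i))

theorem subst_var_none {σ : Subst S} {t : Term S} {x : ℕ} {ch}
    (hd : PFunctor.M.dest t = ⟨Sum.inr x, ch⟩) (hs : σ.toFun x = none) :
    t.subst σ = t := by
  apply dest_inj
  rw [Term.subst, PFunctor.M.dest_corec, substStep_inr_none hd hs, hd]
  show (⟨Sum.inr x, fun i => PFunctor.M.corec (substStep S σ) (ch i, true)⟩ :
      (TermP S).Obj (Term S)) = ⟨Sum.inr x, ch⟩
  exact congrArg (fun g => (⟨Sum.inr x, g⟩ : (TermP S).Obj (Term S)))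
    (funext fun i => i.elim0)

theorem occurs_iff {x : ℕ} {t : Term S} {l ch} (hd : PFunctor.M.dest t = ⟨l, ch⟩) :
    Term.Occurs S x t ↔ l = Sum.inr x ∨ ∃ i, Term.Occurs S x (ch i) := by
  constructor
  · intro h
    cases h with
    | root _ h => rw [hd] at h; exact Or.inl h
    | child _ i h =>
      have h2 : ∃ i, Term.Occurs S x ((PFunctor.M.dest t).2 i) := ⟨i, h⟩
      rw [hd] at h2
      exact Or.inr h2
  · intro h
    cases h with
    | inl h =>
      refine Term.Occurs.root t ?_
      rw [hd]; exact h
    | inr h =>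
      obtain ⟨i, hi⟩ := h
      have key : ∀ i, Term.Occurs S x (ch i) → Term.Occurs S x t := by
        have key0 : ∀ (i : (TermP S).B (PFunctor.M.dest t).1),
            Term.Occurs S x ((PFunctor.M.dest t).2 i) → Term.Occurs S x t :=
          fun i h => Term.Occurs.child t i h
        rw [hd] at key0; exact key0
      exact key i hi

theorem isFinite_iff {t : Term S} {l ch} (hd : PFunctor.M.dest t = ⟨l, ch⟩) :
    Term.IsFinite S t ↔ ∀ i, Term.IsFinite S (ch i) := by
  constructor
  · intro h
    cases h with
    | mk _ h => rw [hd] at h; exact h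
  · intro h
    refine Term.IsFinite.mk t ?_
    rw [hd]; exact h

theorem dest_var (x : ℕ) :
    PFunctor.M.dest (Term.var S x) = ⟨Sum.inr x, fun i => i.elim0⟩ :=
  PFunctor.M.dest_mk _

theorem var_isFinite (x : ℕ) : Term.IsFinite S (Term.var S x) :=
  (isFinite_iff (dest_var x)).2 (fun i => i.elim0)

theorem occurs_var {x y : ℕ} : Term.Occurs S x (Term.var S y) ↔ y = x := by
  rw [occurs_iff (dest_var y)]
  constructor
  · rintro (h | ⟨i, -⟩)
    · exact Sum.inr.inj h
    · exact i.elim0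
  · intro h; exact Or.inl (by rw [h])

theorem var_inj {x y : ℕ} (h : Term.var S x = Term.var S y) : x = y := by
  have := congrArg (fun t => (PFunctor.M.dest t).1) h
  simp only [dest_var] at this
  exact Sum.inr.inj this

end Infra2

section TermLemmas
variable {S : Sig}

theorem subst_agree {σ θ : Subst S} : ∀ {t : Term S}, Term.IsFinite S t →
    (∀ x, Term.Occurs S x t → σ.toFun x = θ.toFun x) →
    Term.subst t σ = Term.subst t θ := by
  intro t ht
  induction ht with
  | mk t hch ih =>
    intro h
    rcases hd : PFunctor.M.dest t with ⟨l, ch⟩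
    rw [hd] at ih
    cases l with
    | inl f =>
      apply dest_inj
      rw [dest_subst_inl hd, dest_subst_inl hd]
      refine congrArg (fun g => (⟨Sum.inl f, g⟩ : (TermP S).Obj (Term S))) (funext fun i => ?_)
      exact ih i (fun x hx => h x ((occurs_iff hd).2 (Or.inr ⟨i, hx⟩)))
    | inr y =>
      have hy := h y ((occurs_iff hd).2 (Or.inl rfl))
      rcases hs : σ.toFun y with _ | s
      · rw [subst_var_none hd hs, subst_var_none hd (hy ▸ hs)]
      · rw [subst_var_some hd hs, subst_var_some hd (hy ▸ hs)]

theorem subst_le_agree {σ θ : Subst S} (hle : σ.le θ) {t : Term S}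
    (ht : Term.IsFinite S t) (hdom : ∀ x, Term.Occurs S x t → x ∈ σ.dom) :
    Term.subst t θ = Term.subst t σ := by
  refine (subst_agree ht fun x hx => ?_).symm
  obtain ⟨s, hs⟩ := Option.isSome_iff_exists.1 (hdom x hx)
  rw [hs, hle x s hs]

theorem subst_subst_var {ρ θ τ : Subst S} : ∀ {t : Term S}, Term.IsFinite S t →
    (∀ x, Term.Occurs S x t → ∃ y s, ρ.toFun x = some (Term.var S y) ∧
      θ.toFun y = some s ∧ τ.toFun x = some s) →
    Term.subst (Term.subst t ρ) θ = Term.subst t τ := by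
  intro t ht
  induction ht with
  | mk t hch ih =>
    intro h
    rcases hd : PFunctor.M.dest t with ⟨l, ch⟩
    rw [hd] at ih
    cases l with
    | inl f =>
      apply dest_inj
      rw [dest_subst_inl (dest_subst_inl hd), dest_subst_inl hd]
      refine congrArg (fun g => (⟨Sum.inl f, g⟩ : (TermP S).Obj (Term S))) (funext fun i => ?_)
      exact ih i (fun x hx => h x ((occurs_iff hd).2 (Or.inr ⟨i, hx⟩)))
    | inr y =>
      obtain ⟨z, s, hρ, hθ, hτ⟩ := h y ((occurs_iff hd).2 (Or.inl rfl))
      rw [subst_var_some hd hρ, subst_var_some (dest_var z) hθ, subst_var_some hd hτ]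

theorem subst_isFinite {σ : Subst S} : ∀ {t : Term S}, Term.IsFinite S t →
    (∀ x s, σ.toFun x = some s → Term.IsFinite S s) →
    Term.IsFinite S (Term.subst t σ) := by
  intro t ht
  induction ht with
  | mk t hch ih =>
    intro h
    rcases hd : PFunctor.M.dest t with ⟨l, ch⟩
    rw [hd] at ih hch
    cases l with
    | inl f => exact (isFinite_iff (dest_subst_inl hd)).2 (fun i => ih i h)
    | inr y =>
      rcases hs : σ.toFun y with _ | s
      · rw [subst_var_none hd hs]
        exact (isFinite_iff hd).2 hch
      · rw [subst_var_some hd hs]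
        exact h y s hs

theorem occurs_subst {σ : Subst S} {x : ℕ} : ∀ {t : Term S}, Term.IsFinite S t →
    Term.Occurs S x (Term.subst t σ) →
    (Term.Occurs S x t ∧ σ.toFun x = none) ∨
      ∃ y s, Term.Occurs S y t ∧ σ.toFun y = some s ∧ Term.Occurs S x s := by
  intro t ht
  induction ht with
  | mk t hch ih =>
    intro hocc
    rcases hd : PFunctor.M.dest t with ⟨l, ch⟩
    rw [hd] at ih
    cases l with
    | inl f =>
      rcases (occurs_iff (dest_subst_inl hd)).1 hocc with h | ⟨i, hi⟩
      · exact absurd h (by simp)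
      · rcases ih i hi with ⟨h1, h2⟩ | ⟨y, s, h1, h2, h3⟩
        · exact Or.inl ⟨(occurs_iff hd).2 (Or.inr ⟨i, h1⟩), h2⟩
        · exact Or.inr ⟨y, s, (occurs_iff hd).2 (Or.inr ⟨i, h1⟩), h2, h3⟩
    | inr y =>
      rcases hs : σ.toFun y with _ | s
      · rw [subst_var_none hd hs] at hocc
        rcases (occurs_iff hd).1 hocc with h | ⟨i, _⟩
        · obtain rfl : y = x := Sum.inr.inj h
          exact Or.inl ⟨hocc, hs⟩
        · exact i.elim0
      · rw [subst_var_some hd hs] at hocc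
        exact Or.inr ⟨y, s, (occurs_iff hd).2 (Or.inl rfl), hs, hocc⟩

theorem occurs_subst_none {σ : Subst S} {x : ℕ} : ∀ {t : Term S}, Term.IsFinite S t →
    Term.Occurs S x t → σ.toFun x = none → Term.Occurs S x (Term.subst t σ) := by
  intro t ht
  induction ht with
  | mk t hch ih =>
    intro hocc hs
    rcases hd : PFunctor.M.dest t with ⟨l, ch⟩
    rw [hd] at ih
    rcases (occurs_iff hd).1 hocc with h | ⟨i, hi⟩
    · subst h
      rw [subst_var_none hd hs]
      exact hocc
    · cases l with
      | inl f => exact (occurs_iff (dest_subst_inl hd)).2 (Or.inr ⟨i, ih i hi hs⟩)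
      | inr z =>
        exact i.elim0
    
theorem termVars_finite : ∀ {t : Term S}, Term.IsFinite S t →
    {x | Term.Occurs S x t}.Finite := by
  intro t ht
  induction ht with
  | mk t hch ih =>
    rcases hd : PFunctor.M.dest t with ⟨l, ch⟩
    rw [hd] at ih
    cases l with
    | inl f =>
      haveI : Finite ((TermP S).B (Sum.inl f)) := inferInstanceAs (Finite (Fin (S.far f)))
      refine Set.Finite.subset (Set.finite_iUnion (fun i => ih i)) ?_
      intro x hx
      rcases (occurs_iff hd).1 hx with h | ⟨i, hi⟩
      · exact absurd h (by simp)
      · exact Set.mem_iUnion.2 ⟨i, hi⟩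
    | inr y =>
      refine Set.Finite.subset (Set.finite_singleton y) ?_
      intro x hx
      rcases (occurs_iff hd).1 hx with h | ⟨i, _⟩
      · exact (Sum.inr.inj h).symm
      · exact i.elim0

end TermLemmas

section AtomLemmas
variable {S : Sig}

theorem atom_subst_args {A B : Atom S} {σ τ : Subst S} (h : A.subst σ = B.subst τ) :
    ∃ hp : A.pred = B.pred, ∀ i, Term.subst (A.args i) σ
      = Term.subst (B.args (Fin.cast (congrArg S.par hp) i)) τ := by
  obtain ⟨pA, aA⟩ := A
  obtain ⟨pB, aB⟩ := B
  have hp : pA = pB := congrArg Atom.pred h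
  subst hp
  simp only [Atom.subst, Atom.mk.injEq, heq_eq_eq, true_and] at h
  refine ⟨rfl, fun i => ?_⟩
  have h2 := congrFun h i
  simpa using h2

theorem atom_subst_subst_var {ρ θ τ : Subst S} {A : Atom S} (hA : A.IsFinite)
    (h : ∀ x, Atom.Occurs x A → ∃ y s, ρ.toFun x = some (Term.var S y) ∧
      θ.toFun y = some s ∧ τ.toFun x = some s) :
    (A.subst ρ).subst θ = A.subst τ :=
  congrArg (Atom.mk A.pred)
    (funext fun i => subst_subst_var (hA i) (fun x hx => h x ⟨i, hx⟩))

theorem atom_subst_le_agree {σ θ : Subst S} (hle : σ.le θ) {A : Atom S}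
    (hA : A.IsFinite) (hdom : ∀ x, Atom.Occurs x A → x ∈ σ.dom) :
    A.subst θ = A.subst σ :=
  congrArg (Atom.mk A.pred)
    (funext fun i => subst_le_agree hle (hA i) (fun x hx => hdom x ⟨i, hx⟩))

theorem atom_subst_isFinite {σ : Subst S} {A : Atom S} (hA : A.IsFinite)
    (h : ∀ x s, σ.toFun x = some s → Term.IsFinite S s) : (A.subst σ).IsFinite :=
  fun i => subst_isFinite (hA i) h

theorem atomVars_finite {A : Atom S} (hA : A.IsFinite) : {x | Atom.Occurs x A}.Finite := by
  refine Set.Finite.subset (Set.finite_iUnion (fun i => termVars_finite (hA i))) ?_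
  rintro x ⟨i, hi⟩
  exact Set.mem_iUnion.2 ⟨i, hi⟩

theorem eqnVars_finite {E : Set (Eqn S)} (hE : EqnSetFin E) : (eqnVars E).Finite := by
  refine Set.Finite.subset (Set.Finite.biUnion hE.1 (fun e he =>
    Set.Finite.union (termVars_finite (hE.2 e he).1) (termVars_finite (hE.2 e he).2))) ?_
  rintro x ⟨e, he, h⟩
  exact Set.mem_biUnion he h

theorem atomsVars_finite {H : Set (Atom S)} (hH : H.Finite)
    (hs : ∀ B ∈ H, B.IsFinite) : (atomsVars H).Finite := by
  refine Set.Finite.subset (Set.Finite.biUnion hH (fun B hB => atomVars_finite (hs B hB))) ?_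
  rintro x ⟨B, hB, h⟩
  exact Set.mem_biUnion hB h

theorem goalVars_finite {G : List (Atom S)} (hG : ∀ B ∈ G, B.IsFinite) :
    (goalVars G).Finite := by
  refine Set.Finite.subset (Set.Finite.biUnion G.finite_toSet
    (fun B hB => atomVars_finite (hG B hB))) ?_
  rintro x ⟨B, hB, h⟩
  exact Set.mem_biUnion hB h

theorem clauseVars_finite (C : Clause S) : (clauseVars C).Finite := by
  refine Set.Finite.subset ((atomVars_finite C.finHead).union
    (Set.Finite.biUnion C.body.finite_toSet
      (fun B hB => atomVars_finite (C.finBody B hB)))) ?_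
  rintro x (h | ⟨B, hB, h⟩)
  · exact Or.inl h
  · exact Or.inr (Set.mem_biUnion hB h)

theorem eqnVars_union {E1 E2 : Set (Eqn S)} :
    eqnVars (E1 ∪ E2) = eqnVars E1 ∪ eqnVars E2 := by
  ext x
  constructor
  · rintro ⟨e, he | he, h⟩
    · exact Or.inl ⟨e, he, h⟩
    · exact Or.inr ⟨e, he, h⟩
  · rintro (⟨e, he, h⟩ | ⟨e, he, h⟩)
    · exact ⟨e, Or.inl he, h⟩
    · exact ⟨e, Or.inr he, h⟩

theorem atomEqs_finite {A B : Atom S} : (atomEqs A B).Finite := by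
  by_cases hp : A.pred = B.pred
  · refine Set.Finite.subset (Set.finite_range
      (fun i : Fin (S.par A.pred) => ((A.args i, B.args (Fin.cast (congrArg S.par hp) i)) : Eqn S))) ?_
    rintro e ⟨hp', i, rfl⟩
    exact ⟨i, rfl⟩
  · have : atomEqs A B = ∅ := by
      ext e; simp only [atomEqs, Set.mem_setOf_eq, Set.mem_empty_iff_false, iff_false]
      rintro ⟨hp', -⟩; exact hp hp'
    rw [this]; exact Set.finite_empty

theorem atomEqs_syn {A B : Atom S} (hA : A.IsFinite) (hB : B.IsFinite) :
    ∀ e ∈ atomEqs A B, Term.IsFinite S e.1 ∧ Term.IsFinite S e.2 := by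
  rintro e ⟨hp, i, rfl⟩
  exact ⟨hA i, hB _⟩

theorem eqnVars_atomEqs {A B : Atom S} :
    eqnVars (atomEqs A B) ⊆ {x | Atom.Occurs x A} ∪ {x | Atom.Occurs x B} := by
  rintro x ⟨e, ⟨hp, i, rfl⟩, h | h⟩
  · exact Or.inl ⟨i, h⟩
  · exact Or.inr ⟨_, h⟩

theorem sol_atomEqs_of_eq {σ : Subst S} {A B : Atom S} (h : A.subst σ = B.subst σ) :
    ∀ e ∈ atomEqs A B, Term.subst e.1 σ = Term.subst e.2 σ := by
  rintro e ⟨hp, i, rfl⟩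
  obtain ⟨hp', hargs⟩ := atom_subst_args h
  exact hargs i

end AtomLemmas

section Constructions
variable {S : Sig}

theorem exists_nat_bound {s : Set ℕ} (hs : s.Finite) : ∃ N, ∀ a ∈ s, a < N := by
  obtain ⟨b, hb⟩ := hs.bddAbove
  exact ⟨b + 1, fun a ha => Nat.lt_succ_of_le (hb ha)⟩

open Classical in
/-- Renaming of the variables of `V` by adding `N`. -/
noncomputable def renameSub (V : Set ℕ) (hV : V.Finite) (N : ℕ) : Subst S where
  toFun x := if x ∈ V then some (Term.var S (x + N)) else none
  finDom := by
    refine hV.subset ?_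
    intro x hx
    by_cases h : x ∈ V
    · exact h
    · simp [h] at hx

theorem renameSub_some {V : Set ℕ} {hV : V.Finite} {N x : ℕ} (h : x ∈ V) :
    (renameSub (S := S) V hV N).toFun x = some (Term.var S (x + N)) := by
  simp [renameSub, h]

theorem renameSub_isSome_iff {V : Set ℕ} {hV : V.Finite} {N x : ℕ} :
    ((renameSub (S := S) V hV N).toFun x).isSome ↔ x ∈ V := by
  by_cases h : x ∈ V <;> simp [renameSub, h]

open Classical in
/-- Extend `σ` by `τ` shifted up by `N` on the variables `x + N`, `x ∈ V`. -/
noncomputable def extendSubst (σ τ : Subst S) (V : Set ℕ) (hV : V.Finite) (N : ℕ) :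
    Subst S where
  toFun y := if N ≤ y ∧ y - N ∈ V then τ.toFun (y - N) else σ.toFun y
  finDom := by
    refine ((σ.finDom.union (hV.image (fun x => x + N)))).subset ?_
    intro y hy
    simp only [Set.mem_setOf_eq] at hy
    by_cases h : N ≤ y ∧ y - N ∈ V
    · exact Or.inr ⟨y - N, h.2, Nat.sub_add_cancel h.1⟩
    · rw [if_neg h] at hy
      exact Or.inl hy

theorem extendSubst_hi {σ τ : Subst S} {V : Set ℕ} {hV : V.Finite} {N x : ℕ}
    (h : x ∈ V) : (extendSubst σ τ V hV N).toFun (x + N) = τ.toFun x := by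
  have h1 : N ≤ x + N := Nat.le_add_left _ _
  have h2 : x + N - N = x := by omega
  simp only [extendSubst]
  rw [if_pos ⟨h1, by rw [h2]; exact h⟩, h2]

theorem extendSubst_lo {σ τ : Subst S} {V : Set ℕ} {hV : V.Finite} {N y : ℕ}
    (h : y < N) : (extendSubst σ τ V hV N).toFun y = σ.toFun y := by
  simp only [extendSubst]
  rw [if_neg (fun hc => absurd hc.1 (Nat.not_le.2 h))]

theorem freshRenamingFor_mono {ρ : Subst S} {C : Clause S} {a1 a2 : Set ℕ}
    (h : a1 ⊆ a2) (hf : FreshRenamingFor ρ C a2) : FreshRenamingFor ρ C a1 :=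
  ⟨fun x t hxt => by obtain ⟨y, hy, hy2⟩ := hf.1 x t hxt; exact ⟨y, hy, fun hc => hy2 (h hc)⟩,
   hf.2.1, hf.2.2⟩

theorem renameSub_fresh {C : Clause S} {avoid : Set ℕ} {N : ℕ}
    (hN : ∀ a ∈ avoid, a < N) :
    FreshRenamingFor (renameSub (S := S) (clauseVars C) (clauseVars_finite C) N) C avoid := by
  refine ⟨?_, ?_, ?_⟩
  · intro x t hxt
    by_cases h : x ∈ clauseVars C
    · rw [renameSub_some h] at hxt
      refine ⟨x + N, (Option.some_inj.1 hxt).symm, fun hc => ?_⟩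
      exact absurd (hN _ hc) (Nat.not_lt.2 (Nat.le_add_left _ _))
    · simp [renameSub, h] at hxt
  · intro x hx
    exact renameSub_isSome_iff.2 hx
  · intro x y hxy hs
    have hx : x ∈ clauseVars C := renameSub_isSome_iff.1 hs
    have hy : y ∈ clauseVars C := renameSub_isSome_iff.1 (hxy ▸ hs)
    rw [renameSub_some hx, renameSub_some hy] at hxy
    have := var_inj (Option.some_inj.1 hxy)
    omega

end Constructions

section Systems
variable {S : Sig}

theorem TP_mono {P : Set (Clause S)} {I J : Set (Atom S)} (h : I ⊆ J) : TP P I ⊆ TP P J := by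
  rintro A ⟨r, hr, h1, h2⟩
  exact ⟨r, hr, h1, fun B hB => h (h2 B hB)⟩

theorem Ind_isModel (Q : Set (Clause S)) : IsModel Q (Ind Q) := by
  intro A hA
  exact Set.mem_sInter.2 fun I hI =>
    hI (TP_mono (fun B hB => Set.mem_sInter.1 hB I hI) hA)

theorem GroundInst_mono {P Q : Set (Clause S)} (h : P ⊆ Q) : GroundInst P ⊆ GroundInst Q := by
  rintro r ⟨C, hC, τ, hτ⟩
  exact ⟨C, h hC, τ, hτ⟩

/-- Fueled version of the inductive interpretation of a program. -/
def IndN (Q : Set (Clause S)) : ℕ → Atom S → Prop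
  | 0, _ => False
  | n+1, A => ∃ r ∈ GroundInst Q, r.1 = A ∧ ∀ B ∈ r.2, IndN Q n B

theorem IndN_mono {Q : Set (Clause S)} : ∀ {m n : ℕ}, m ≤ n → ∀ {A}, IndN Q m A → IndN Q n A := by
  intro m n h
  induction n generalizing m with
  | zero => intro A hA; cases Nat.le_zero.1 h; exact hA.elim
  | succ n ih =>
    intro A hA
    cases m with
    | zero => exact hA.elim
    | succ m =>
      obtain ⟨r, hr, h1, h2⟩ := hA
      exact ⟨r, hr, h1, fun B hB => ih (Nat.succ_le_succ_iff.1 h) (h2 B hB)⟩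

theorem exists_fuel_list {α : Type*} {p : ℕ → α → Prop}
    (mono : ∀ {m n : ℕ}, m ≤ n → ∀ a, p m a → p n a) :
    ∀ {l : List α}, (∀ a ∈ l, ∃ n, p n a) → ∃ n, ∀ a ∈ l, p n a := by
  intro l
  induction l with
  | nil => exact fun _ => ⟨0, by simp⟩
  | cons a l ih =>
    intro h
    obtain ⟨n1, hn1⟩ := h a (List.mem_cons_self)
    obtain ⟨n2, hn2⟩ := ih (fun b hb => h b (List.mem_cons_of_mem a hb))
    refine ⟨max n1 n2, fun b hb => ?_⟩
    rcases List.mem_cons.1 hb with rfl | hb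
    · exact mono (Nat.le_max_left _ _) _ hn1
    · exact mono (Nat.le_max_right _ _) _ (hn2 b hb)

/-- Derivation trees for the inductive semantics. -/
inductive IndDeriv (Q : Set (Clause S)) : Atom S → Prop
  | mk (r : Atom S × List (Atom S)) (hr : r ∈ GroundInst Q) (A : Atom S)
      (h1 : r.1 = A) (h2 : ∀ B ∈ r.2, IndDeriv Q B) : IndDeriv Q A

theorem mem_Ind_exists_IndN {Q : Set (Clause S)} {A : Atom S} (h : A ∈ Ind Q) :
    ∃ n, IndN Q n A := by
  have hd : IndDeriv Q A := by
    refine Set.mem_sInter.1 h {A | IndDeriv Q A} ?_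
    rintro B ⟨r, hr, h1, h2⟩
    exact IndDeriv.mk r hr B h1 h2
  clear h
  induction hd with
  | mk r hr A h1 h2 ih =>
    obtain ⟨n, hn⟩ := exists_fuel_list (p := fun n B => IndN Q n B) (fun h a => IndN_mono h) ih
    exact ⟨n + 1, r, hr, h1, hn⟩

/-- Fueled version of `LoopInd`. -/
def LoopN (P coP : Set (Clause S)) : ℕ → Set (Atom S) → Atom S → Prop
  | 0, _, _ => False
  | n+1, H, A => (A ∈ H ∧ A ∈ Ind (P ∪ coP)) ∨
      ∃ r ∈ GroundInst P, r.1 = A ∧ ∀ B ∈ r.2, LoopN P coP n (H ∪ {A}) B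

theorem LoopN_mono {P coP : Set (Clause S)} :
    ∀ {m n : ℕ}, m ≤ n → ∀ {H A}, LoopN P coP m H A → LoopN P coP n H A := by
  intro m n h
  induction n generalizing m with
  | zero => intro H A hA; cases Nat.le_zero.1 h; exact hA.elim
  | succ n ih =>
    intro H A hA
    cases m with
    | zero => exact hA.elim
    | succ m =>
      rcases hA with h1 | ⟨r, hr, h1, h2⟩
      · exact Or.inl h1
      · exact Or.inr ⟨r, hr, h1, fun B hB => ih (Nat.succ_le_succ_iff.1 h) (h2 B hB)⟩

theorem loopInd_exists_loopN {P coP : Set (Clause S)} {H : Set (Atom S)} {A : Atom S}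
    (h : LoopInd P coP H A) : ∃ n, LoopN P coP n H A := by
  induction h with
  | hp h1 h2 => exact ⟨1, Or.inl ⟨h1, h2⟩⟩
  | rule r hr h1 h2 ih =>
    obtain ⟨n, hn⟩ := exists_fuel_list (p := fun n B => LoopN P coP n _ B) (fun h a => LoopN_mono h) ih
    exact ⟨n + 1, Or.inr ⟨r, hr, h1, hn⟩⟩

theorem loopInd_mem_Ind {P coP : Set (Clause S)} {H : Set (Atom S)} {A : Atom S}
    (h : LoopInd P coP H A) : A ∈ Ind (P ∪ coP) := by
  induction h with
  | hp h1 h2 => exact h2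
  | rule r hr h1 h2 ih =>
    exact Ind_isModel (P ∪ coP) ⟨r, GroundInst_mono Set.subset_union_left hr, h1, ih⟩

end Systems

section Core
variable {S : Sig}

theorem Subst.le_refl (σ : Subst S) : σ.le σ := fun _ _ h => h

theorem Subst.le_trans {σ θ ι : Subst S} (h1 : σ.le θ) (h2 : θ.le ι) : σ.le ι :=
  fun x t h => h2 x t (h1 x t h)

theorem Subst.dom_mono {σ θ : Subst S} (h : σ.le θ) : σ.dom ⊆ θ.dom := by
  intro x hx
  obtain ⟨t, ht⟩ := Option.isSome_iff_exists.1 hx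
  exact Option.isSome_iff_exists.2 ⟨t, h x t ht⟩

theorem step_setup {C : Clause S} {τ σ : Subst S} {E : Set (Eqn S)}
    {H : Set (Atom S)} {B : Atom S} {G' : List (Atom S)}
    (hHfin : H.Finite) (hHsyn : ∀ D ∈ H, D.IsFinite)
    (hBsyn : B.IsFinite) (hG'syn : ∀ D ∈ G', D.IsFinite)
    (hE : EqnSetFin E) (hσ : σ ∈ sol E)
    (hdH : atomsVars H ⊆ σ.dom) (hdG : goalVars (B :: G') ⊆ σ.dom)
    (hτ : τ.Ground) (hgr : (C.head.subst τ).Ground)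
    (hgrb : ∀ D ∈ C.body, ((D.subst τ) : Atom S).Ground)
    (heq : B.subst σ = C.head.subst τ) :
    ∃ (ρ θ : Subst S),
      FreshRenamingFor ρ C (eqnVars E ∪ atomsVars H ∪ goalVars (B :: G')) ∧
      σ.le θ ∧ θ.Ground ∧
      θ ∈ sol (E ∪ atomEqs B (C.head.subst ρ)) ∧
      EqnSetFin (E ∪ atomEqs B (C.head.subst ρ)) ∧
      B.pred = (C.head.subst ρ).pred ∧
      (∀ D : Atom S, D.IsFinite → (∀ x, Atom.Occurs x D → x ∈ clauseVars C) →
         (D.subst ρ).subst θ = D.subst τ ∧ ((D.subst ρ) : Atom S).IsFinite ∧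
         (∀ x, Atom.Occurs x (D.subst ρ) → x ∈ θ.dom)) ∧
      atomsVars (H ∪ {B}) ⊆ θ.dom := by
  classical
  set V := clauseVars C with hV
  have hVfin : V.Finite := clauseVars_finite C
  -- the set of variables to avoid
  have havoid : (eqnVars E ∪ atomsVars H ∪ goalVars (B :: G') ∪ σ.dom).Finite := by
    refine (((eqnVars_finite hE).union (atomsVars_finite hHfin hHsyn)).union
      (goalVars_finite ?_)).union σ.finDom
    intro D hD
    rcases List.mem_cons.1 hD with rfl | hD
    · exact hBsyn
    · exact hG'syn D hD
  obtain ⟨N, hN⟩ := exists_nat_bound havoid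
  set ρ : Subst S := renameSub V hVfin N with hρ
  set θ : Subst S := extendSubst σ τ V hVfin N with hθ
  -- τ is defined on all variables of the clause
  have hτsome : ∀ x ∈ V, ∃ s, τ.toFun x = some s := by
    intro x hx
    rcases hs : τ.toFun x with _ | s
    · exfalso
      rcases hx with hx | ⟨D, hD, hx⟩
      · obtain ⟨i, hxi⟩ := hx
        exact hgr i x (occurs_subst_none (C.finHead i) hxi hs)
      · obtain ⟨i, hxi⟩ := hx
        exact hgrb D hD i x (occurs_subst_none (C.finBody D hD i) hxi hs)
    · exact ⟨s, rfl⟩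
  have key : ∀ x ∈ V, ∃ s, ρ.toFun x = some (Term.var S (x + N)) ∧
      θ.toFun (x + N) = some s ∧ τ.toFun x = some s := by
    intro x hx
    obtain ⟨s, hs⟩ := hτsome x hx
    exact ⟨s, renameSub_some hx, by rw [hθ, extendSubst_hi hx, hs], hs⟩
  have hle : σ.le θ := by
    intro x t ht
    have hxd : x ∈ σ.dom := Option.isSome_iff_exists.2 ⟨t, ht⟩
    have hxN : x < N := hN x (Or.inr hxd)
    rw [hθ, extendSubst_lo hxN]
    exact ht
  have hθg : θ.Ground := by
    intro y t ht
    rw [hθ] at ht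
    by_cases h : N ≤ y ∧ y - N ∈ V
    · rw [show (extendSubst σ τ V hVfin N).toFun y
          = τ.toFun (y - N) from by simp only [extendSubst]; rw [if_pos h]] at ht
      exact hτ _ t ht
    · rw [show (extendSubst σ τ V hVfin N).toFun y
          = σ.toFun y from by simp only [extendSubst]; rw [if_neg h]] at ht
      exact hσ.1 _ t ht
  have hdomθ : σ.dom ⊆ θ.dom := Subst.dom_mono hle
  have hρfin : ∀ x s, ρ.toFun x = some s → Term.IsFinite S s := by
    intro x s hs
    by_cases h : x ∈ V
    · rw [renameSub_some h] at hs
      rw [← Option.some_inj.1 hs]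
      exact var_isFinite _
    · simp [hρ, renameSub, h] at hs
  have hρvar : ∀ x, Atom.Occurs x B → x ∈ σ.dom := fun x hx => hdG ⟨B, List.mem_cons_self .., hx⟩
  -- variables of a `ρ`-instance are in the domain of `θ`
  have hvarsρ : ∀ D : Atom S, D.IsFinite → (∀ x, Atom.Occurs x D → x ∈ V) →
      ∀ x, Atom.Occurs x (D.subst ρ) → x ∈ θ.dom := by
    intro D hDf hDV x hx
    obtain ⟨i, hxi⟩ := hx
    rcases occurs_subst (hDf i) hxi with ⟨h1, h2⟩ | ⟨y, s, h1, h2, h3⟩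
    · have : x ∈ V := hDV x ⟨i, h1⟩
      rw [renameSub_some this] at h2; exact absurd h2 (by simp)
    · have hyV : y ∈ V := hDV y ⟨i, h1⟩
      rw [renameSub_some hyV] at h2
      obtain rfl : Term.var S (y + N) = s := Option.some_inj.1 h2
      obtain rfl : y + N = x := occurs_var.1 h3
      obtain ⟨s', -, hs', -⟩ := key y hyV
      exact Option.isSome_iff_exists.2 ⟨s', hs'⟩
  -- composition on clause atoms
  have hcomp : ∀ D : Atom S, D.IsFinite → (∀ x, Atom.Occurs x D → x ∈ V) →
      (D.subst ρ).subst θ = D.subst τ := by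
    intro D hDf hDV
    refine atom_subst_subst_var hDf (fun x hx => ?_)
    obtain ⟨s, h1, h2, h3⟩ := key x (hDV x hx)
    exact ⟨x + N, s, h1, h2, h3⟩
  have hheadV : ∀ x, Atom.Occurs x C.head → x ∈ V := fun x hx => Or.inl hx
  have hheadρfin : ((C.head.subst ρ) : Atom S).IsFinite :=
    atom_subst_isFinite C.finHead hρfin
  have hBθ : B.subst θ = B.subst σ := atom_subst_le_agree hle hBsyn hρvar
  have hsolθ : θ ∈ sol (E ∪ atomEqs B (C.head.subst ρ)) := by
    refine ⟨hθg, ?_, ?_⟩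
    · rw [eqnVars_union]
      rintro x (hx | hx)
      · exact hdomθ (hσ.2.1 hx)
      · rcases eqnVars_atomEqs hx with h | h
        · exact hdomθ (hρvar x h)
        · exact hvarsρ C.head C.finHead hheadV x h
    · rintro e (he | he)
      · have hvars : ∀ x, Term.Occurs S x e.1 ∨ Term.Occurs S x e.2 → x ∈ σ.dom :=
          fun x hx => hσ.2.1 ⟨e, he, hx⟩
        rw [subst_le_agree hle (hE.2 e he).1 (fun x hx => hvars x (Or.inl hx)),
          subst_le_agree hle (hE.2 e he).2 (fun x hx => hvars x (Or.inr hx))]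
        exact hσ.2.2 e he
      · refine sol_atomEqs_of_eq ?_ e he
        rw [hBθ, heq, hcomp C.head C.finHead hheadV]
  have hEfin : EqnSetFin (E ∪ atomEqs B (C.head.subst ρ)) := by
    constructor
    · exact hE.1.union atomEqs_finite
    · rintro e (he | he)
      · exact hE.2 e he
      · exact atomEqs_syn hBsyn hheadρfin e he
  have hp : B.pred = (C.head.subst ρ).pred := by
    have := congrArg Atom.pred heq
    exact this
  refine ⟨ρ, θ, ?_, hle, hθg, hsolθ, hEfin, hp, ?_, ?_⟩
  · exact renameSub_fresh (fun a ha => hN a (Or.inl ha))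
  · intro D hDf hDV
    exact ⟨hcomp D hDf hDV, atom_subst_isFinite hDf hρfin, hvarsρ D hDf hDV⟩
  · rintro x ⟨D, hD | hD, hx⟩
    · exact hdomθ (hdH ⟨D, hD, hx⟩)
    · rw [Set.mem_singleton_iff.1 hD] at hx
      exact hdomθ (hρvar x hx)

end Core

section IndComplete
variable {S : Sig}

theorem ind_complete (Q : Set (Clause S)) :
    ∀ (n : ℕ) (G : List (Atom S)) (H : Set (Atom S)) (E : Set (Eqn S)) (σ : Subst S),
      H.Finite → (∀ D ∈ H, D.IsFinite) → (∀ D ∈ G, D.IsFinite) →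
      EqnSetFin E → σ ∈ sol E → atomsVars H ⊆ σ.dom → goalVars G ⊆ σ.dom →
      (∀ B ∈ G, IndN Q n (B.subst σ)) →
      ∃ (E' : Set (Eqn S)) (θ : Subst S), EqnSetFin E' ∧ θ ∈ sol E' ∧
        OpSem S Q ∅ H G E E' ∧ σ.le θ := by
  intro n
  induction n with
  | zero =>
    intro G H E σ _ _ _ hE hσ _ _ hind
    cases G with
    | nil => exact ⟨E, σ, hE, hσ, OpSem.empty .., Subst.le_refl σ⟩
    | cons B G' => exact absurd (hind B (List.mem_cons_self)) (fun h => h)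
  | succ n ihn =>
    intro G
    induction G with
    | nil =>
      intro H E σ _ _ _ hE hσ _ _ _
      exact ⟨E, σ, hE, hσ, OpSem.empty .., Subst.le_refl σ⟩
    | cons B G' ihG =>
      intro H E σ hHfin hHsyn hGsyn hE hσ hdH hdG hind
      obtain ⟨r, hr, h1, h2⟩ := hind B (List.mem_cons_self)
      obtain ⟨C, hC, τ, hτg, hr1, hr2, hgr, hgrb⟩ := hr
      have heq : B.subst σ = C.head.subst τ := by rw [← h1, hr1]
      have hgr' : ((C.head.subst τ) : Atom S).Ground := hr1 ▸ hgr
      have hgrb' : ∀ D ∈ C.body, ((D.subst τ) : Atom S).Ground := by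
        intro D hD
        exact hgrb _ (hr2 ▸ List.mem_map_of_mem (f := fun B => B.subst τ) hD)
      have hBsyn : B.IsFinite := hGsyn B (List.mem_cons_self)
      have hG'syn : ∀ D ∈ G', D.IsFinite := fun D hD => hGsyn D (List.mem_cons_of_mem B hD)
      obtain ⟨ρ, θ, hfresh, hle, hθg, hsolθ, hEfin, hp, hinst, hdomHB⟩ :=
        step_setup hHfin hHsyn hBsyn hG'syn hE hσ hdH hdG hτg hgr' hgrb' heq
      have hbodysyn : ∀ D' ∈ C.body.map (fun D => D.subst ρ), Atom.IsFinite D' := by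
        rintro D' hD'
        obtain ⟨D, hD, rfl⟩ := List.mem_map.1 hD'
        exact (hinst D (C.finBody D hD) (fun x hx => Or.inr ⟨D, hD, hx⟩)).2.1
      have hbodyvars : goalVars (C.body.map (fun D => D.subst ρ)) ⊆ θ.dom := by
        rintro x ⟨D', hD', hx⟩
        obtain ⟨D, hD, rfl⟩ := List.mem_map.1 hD'
        exact (hinst D (C.finBody D hD) (fun x hx => Or.inr ⟨D, hD, hx⟩)).2.2 x hx
      have hbody : ∀ D' ∈ C.body.map (fun D => D.subst ρ), IndN Q n (D'.subst θ) := by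
        rintro D' hD'
        obtain ⟨D, hD, rfl⟩ := List.mem_map.1 hD'
        rw [(hinst D (C.finBody D hD) (fun x hx => Or.inr ⟨D, hD, hx⟩)).1]
        exact h2 _ (hr2 ▸ List.mem_map_of_mem (f := fun B => B.subst τ) hD)
      have hHBsyn : ∀ D ∈ H ∪ {B}, Atom.IsFinite D := by
        rintro D (hD | hD)
        · exact hHsyn D hD
        · rw [Set.mem_singleton_iff.1 hD]; exact hBsyn
      obtain ⟨E2, θ1, hE2, hθ1, hop1, hle1⟩ :=
        ihn (C.body.map (fun D => D.subst ρ)) (H ∪ {B}) (E ∪ atomEqs B (C.head.subst ρ)) θ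
          (hHfin.union (Set.finite_singleton B)) hHBsyn hbodysyn hEfin hsolθ hdomHB
          hbodyvars hbody
      have hleσθ1 : σ.le θ1 := Subst.le_trans hle hle1
      have htail : ∀ D ∈ G', IndN Q (n+1) (D.subst θ1) := by
        intro D hD
        rw [atom_subst_le_agree hleσθ1 (hG'syn D hD)
          (fun x hx => hdG ⟨D, List.mem_cons_of_mem B hD, hx⟩)]
        exact hind D (List.mem_cons_of_mem B hD)
      obtain ⟨E3, θ2, hE3, hθ2, hop2, hle2⟩ :=
        ihG H E2 θ1 hHfin hHsyn hG'syn hE2 hθ1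
          (fun x hx => (Subst.dom_mono hleσθ1) (hdH hx))
          (fun x hx => (Subst.dom_mono hleσθ1) (hdG ⟨hx.choose, List.mem_cons_of_mem B hx.choose_spec.1, hx.choose_spec.2⟩))
          htail
      refine ⟨E3, θ2, hE3, hθ2, ?_, Subst.le_trans hleσθ1 hle2⟩
      exact OpSem.step (S := S) (P := Q) (coP := ∅) (G1 := []) (G2 := G') (A := B)
        (E1 := E) C ρ hC hfresh hp ⟨θ, hsolθ⟩ hop1 hop2

theorem ind_complete' {Q : Set (Clause S)} {G : List (Atom S)} {H : Set (Atom S)}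
    {E : Set (Eqn S)} {σ : Subst S}
    (hHfin : H.Finite) (hHsyn : ∀ D ∈ H, D.IsFinite) (hGsyn : ∀ D ∈ G, D.IsFinite)
    (hE : EqnSetFin E) (hσ : σ ∈ sol E) (hdH : atomsVars H ⊆ σ.dom)
    (hdG : goalVars G ⊆ σ.dom) (hind : ∀ B ∈ G, B.subst σ ∈ Ind Q) :
    ∃ (E' : Set (Eqn S)) (θ : Subst S), EqnSetFin E' ∧ θ ∈ sol E' ∧
      OpSem S Q ∅ H G E E' ∧ σ.le θ := by
  obtain ⟨n, hn⟩ := exists_fuel_list (p := fun n B => IndN Q n ((B : Atom S).subst σ))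
    (fun h a => IndN_mono h) (fun B hB => mem_Ind_exists_IndN (hind B hB))
  exact ind_complete Q n G H E σ hHfin hHsyn hGsyn hE hσ hdH hdG hn

end IndComplete

section Main
variable {S : Sig}

theorem loop_complete (P coP : Set (Clause S)) (hco : coP ≠ ∅) :
    ∀ (n : ℕ) (G : List (Atom S)) (H : Set (Atom S)) (E : Set (Eqn S)) (σ : Subst S),
      H.Finite → (∀ D ∈ H, D.IsFinite) → (∀ D ∈ G, D.IsFinite) →
      EqnSetFin E → σ ∈ sol E → atomsVars H ⊆ σ.dom → goalVars G ⊆ σ.dom →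
      (∀ B ∈ G, LoopN P coP n ((fun D => D.subst σ) '' H) (B.subst σ)) →
      ∃ (E' : Set (Eqn S)) (θ : Subst S), EqnSetFin E' ∧ θ ∈ sol E' ∧
        OpSem S P coP H G E E' ∧ σ.le θ := by
  intro n
  induction n with
  | zero =>
    intro G H E σ _ _ _ hE hσ _ _ hind
    cases G with
    | nil => exact ⟨E, σ, hE, hσ, OpSem.empty .., Subst.le_refl σ⟩
    | cons B G' => exact absurd (hind B (List.mem_cons_self)) (fun h => h)
  | succ n ihn =>
    intro G
    induction G with
    | nil =>
      intro H E σ _ _ _ hE hσ _ _ _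
      exact ⟨E, σ, hE, hσ, OpSem.empty .., Subst.le_refl σ⟩
    | cons B G' ihG =>
      intro H E σ hHfin hHsyn hGsyn hE hσ hdH hdG hind
      have hBsyn : B.IsFinite := hGsyn B (List.mem_cons_self)
      have hG'syn : ∀ D ∈ G', D.IsFinite := fun D hD => hGsyn D (List.mem_cons_of_mem B hD)
      have hBdom : ∀ x, Atom.Occurs x B → x ∈ σ.dom :=
        fun x hx => hdG ⟨B, List.mem_cons_self, hx⟩
      rcases hind B (List.mem_cons_self) with ⟨hmem, hInd⟩ | ⟨r, hr, h1, h2⟩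
      · -- (co-hyp) case
        obtain ⟨B', hB', hBeq⟩ := hmem
        have hp' : B.pred = B'.pred := (congrArg Atom.pred hBeq).symm
        have hsol2 : σ ∈ sol (E ∪ atomEqs B B') := by
          refine ⟨hσ.1, ?_, ?_⟩
          · rw [eqnVars_union]
            rintro x (hx | hx)
            · exact hσ.2.1 hx
            · rcases eqnVars_atomEqs hx with h | h
              · exact hBdom x h
              · exact hdH ⟨B', hB', h⟩
          · rintro e (he | he)
            · exact hσ.2.2 e he
            · exact sol_atomEqs_of_eq hBeq.symm e he
        have hE2fin : EqnSetFin (E ∪ atomEqs B B') :=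
          ⟨hE.1.union atomEqs_finite, by
            rintro e (he | he)
            · exact hE.2 e he
            · exact atomEqs_syn hBsyn (hHsyn B' hB') e he⟩
        obtain ⟨E2, θ1, hE2, hθ1, hop1, hle1⟩ :=
          ind_complete' (Q := P ∪ coP) (G := [B]) (H := (∅ : Set (Atom S)))
            (E := E ∪ atomEqs B B') (σ := σ)
            Set.finite_empty (by rintro D ⟨⟩) (by
              rintro D hD
              rw [List.mem_singleton.1 hD]; exact hBsyn)
            hE2fin hsol2 (by rintro x ⟨D, ⟨⟩, -⟩) (by
              rintro x ⟨D, hD, hx⟩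
              rw [List.mem_singleton.1 hD] at hx
              exact hBdom x hx)
            (by
              rintro D hD
              rw [List.mem_singleton.1 hD]
              exact loopInd_mem_Ind (by
                -- rebuild a LoopInd from hInd: A ∈ Ind (P ∪ coP) is itself membership
                exact LoopInd.hp (Set.mem_singleton _) hInd))
        have hleσθ1 : σ.le θ1 := hle1
        have himg : (fun D => D.subst θ1) '' H = (fun D => D.subst σ) '' H :=
          Set.image_congr (fun D hD =>
            atom_subst_le_agree hleσθ1 (hHsyn D hD) (fun x hx => hdH ⟨D, hD, hx⟩))
        have htail : ∀ D ∈ G', LoopN P coP (n+1) ((fun D => D.subst θ1) '' H) (D.subst θ1) := by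
          intro D hD
          rw [himg, atom_subst_le_agree hleσθ1 (hG'syn D hD)
            (fun x hx => hdG ⟨D, List.mem_cons_of_mem B hD, hx⟩)]
          exact hind D (List.mem_cons_of_mem B hD)
        obtain ⟨E3, θ2, hE3, hθ2, hop2, hle2⟩ :=
          ihG H E2 θ1 hHfin hHsyn hG'syn hE2 hθ1
            (fun x hx => (Subst.dom_mono hleσθ1) (hdH hx))
            (fun x hx => (Subst.dom_mono hleσθ1)
              (hdG ⟨hx.choose, List.mem_cons_of_mem B hx.choose_spec.1, hx.choose_spec.2⟩))
            htail
        refine ⟨E3, θ2, hE3, hθ2, ?_, Subst.le_trans hleσθ1 hle2⟩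
        exact OpSem.cohyp (S := S) (P := P) (coP := coP) (G1 := []) (G2 := G')
          (A := B) (B := B') (E1 := E) hco hB' hp' ⟨σ, hsol2⟩ hop1 hop2
      · -- (step) case
        obtain ⟨C, hC, τ, hτg, hr1, hr2, hgr, hgrb⟩ := hr
        have heq : B.subst σ = C.head.subst τ := by rw [← h1, hr1]
        have hgr' : ((C.head.subst τ) : Atom S).Ground := hr1 ▸ hgr
        have hgrb' : ∀ D ∈ C.body, ((D.subst τ) : Atom S).Ground := by
          intro D hD
          exact hgrb _ (hr2 ▸ List.mem_map_of_mem (f := fun B => B.subst τ) hD)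
        obtain ⟨ρ, θ, hfresh, hle, hθg, hsolθ, hEfin, hp, hinst, hdomHB⟩ :=
          step_setup hHfin hHsyn hBsyn hG'syn hE hσ hdH hdG hτg hgr' hgrb' heq
        have hbodysyn : ∀ D' ∈ C.body.map (fun D => D.subst ρ), Atom.IsFinite D' := by
          rintro D' hD'
          obtain ⟨D, hD, rfl⟩ := List.mem_map.1 hD'
          exact (hinst D (C.finBody D hD) (fun x hx => Or.inr ⟨D, hD, hx⟩)).2.1
        have hbodyvars : goalVars (C.body.map (fun D => D.subst ρ)) ⊆ θ.dom := by
          rintro x ⟨D', hD', hx⟩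
          obtain ⟨D, hD, rfl⟩ := List.mem_map.1 hD'
          exact (hinst D (C.finBody D hD) (fun x hx => Or.inr ⟨D, hD, hx⟩)).2.2 x hx
        have hHBsyn : ∀ D ∈ H ∪ {B}, Atom.IsFinite D := by
          rintro D (hD | hD)
          · exact hHsyn D hD
          · rw [Set.mem_singleton_iff.1 hD]; exact hBsyn
        have himgθ : (fun D => D.subst θ) '' (H ∪ {B})
            = ((fun D => D.subst σ) '' H) ∪ {B.subst σ} := by
          rw [Set.image_union, Set.image_singleton]
          congr 1
          · exact Set.image_congr (fun D hD =>
              atom_subst_le_agree hle (hHsyn D hD) (fun x hx => hdH ⟨D, hD, hx⟩))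
          · rw [atom_subst_le_agree hle hBsyn hBdom]
        have hbody : ∀ D' ∈ C.body.map (fun D => D.subst ρ),
            LoopN P coP n ((fun D => D.subst θ) '' (H ∪ {B})) (D'.subst θ) := by
          rintro D' hD'
          obtain ⟨D, hD, rfl⟩ := List.mem_map.1 hD'
          rw [himgθ, (hinst D (C.finBody D hD) (fun x hx => Or.inr ⟨D, hD, hx⟩)).1]
          exact h2 _ (hr2 ▸ List.mem_map_of_mem (f := fun B => B.subst τ) hD)
        obtain ⟨E2, θ1, hE2, hθ1, hop1, hle1⟩ :=
          ihn (C.body.map (fun D => D.subst ρ)) (H ∪ {B}) (E ∪ atomEqs B (C.head.subst ρ)) θ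
            (hHfin.union (Set.finite_singleton B)) hHBsyn hbodysyn hEfin hsolθ hdomHB
            hbodyvars hbody
        have hleσθ1 : σ.le θ1 := Subst.le_trans hle hle1
        have himg : (fun D => D.subst θ1) '' H = (fun D => D.subst σ) '' H :=
          Set.image_congr (fun D hD =>
            atom_subst_le_agree hleσθ1 (hHsyn D hD) (fun x hx => hdH ⟨D, hD, hx⟩))
        have htail : ∀ D ∈ G', LoopN P coP (n+1) ((fun D => D.subst θ1) '' H) (D.subst θ1) := by
          intro D hD
          rw [himg, atom_subst_le_agree hleσθ1 (hG'syn D hD)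
            (fun x hx => hdG ⟨D, List.mem_cons_of_mem B hD, hx⟩)]
          exact hind D (List.mem_cons_of_mem B hD)
        obtain ⟨E3, θ2, hE3, hθ2, hop2, hle2⟩ :=
          ihG H E2 θ1 hHfin hHsyn hG'syn hE2 hθ1
            (fun x hx => (Subst.dom_mono hleσθ1) (hdH hx))
            (fun x hx => (Subst.dom_mono hleσθ1)
              (hdG ⟨hx.choose, List.mem_cons_of_mem B hx.choose_spec.1, hx.choose_spec.2⟩))
            htail
        refine ⟨E3, θ2, hE3, hθ2, ?_, Subst.le_trans hleσθ1 hle2⟩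
        exact OpSem.step (S := S) (P := P) (coP := coP) (G1 := []) (G2 := G') (A := B)
          (E1 := E) C ρ hC hfresh hp ⟨θ, hsolθ⟩ hop1 hop2

end Main

/-- Single-atom completeness w.r.t. the inductive characterization of regular semantics:
if `Hσ ⊢ Aσ` is derivable in `Loop(P,coP)` then resolution of `⟨A | E⟩` under `H`
succeeds with an answer extending `σ`. -/
theorem single_atom_completeness_wrt_loop (S : Sig) (P coP : Set (Clause S))
    (hP : P.Finite) (hcoP : coP.Finite)
    (H : Set (Atom S)) (hHfin : H.Finite) (hHsyn : ∀ B ∈ H, B.IsFinite)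
    (A : Atom S) (hAfin : A.IsFinite)
    (E : Set (Eqn S)) (hE : EqnSetFin E)
    (σ : Subst S) (hσ : σ ∈ sol E)
    (hdomH : atomsVars H ⊆ σ.dom) (hdomA : ∀ x, Atom.Occurs x A → x ∈ σ.dom)
    (h : LoopInd P coP ((fun B => B.subst σ) '' H) (A.subst σ)) :
    ∃ (E' : Set (Eqn S)) (θ : Subst S), EqnSetFin E' ∧ θ ∈ sol E' ∧
      OpSem S P coP H [A] E E' ∧ σ.le θ := by
  have hdG : goalVars [A] ⊆ σ.dom := by
    rintro x ⟨D, hD, hx⟩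
    rw [List.mem_singleton.1 hD] at hx
    exact hdomA x hx
  have hGsyn : ∀ D ∈ [A], Atom.IsFinite D := by
    rintro D hD
    rw [List.mem_singleton.1 hD]; exact hAfin
  by_cases hco : coP = ∅
  · subst hco
    have hA : A.subst σ ∈ Ind P := by
      have := loopInd_mem_Ind h
      rwa [Set.union_empty] at this
    exact ind_complete' hHfin hHsyn hGsyn hE hσ hdomH hdG (by
      rintro D hD
      rw [List.mem_singleton.1 hD]; exact hA)
  · obtain ⟨n, hn⟩ := loopInd_exists_loopN h
    exact loop_complete P coP hco n [A] H E σ hHfin hHsyn hGsyn hE hσ hdomH hdG (by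
      rintro D hD
      rw [List.mem_singleton.1 hD]; exact hn)

end FlexLP
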